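/- There is a universal constant C > 0 such that for all real r > 0, r₀ ∈ [0, r] and β with |β| ≤ π/3, writing r_β = r₀ + (r − r₀)e^{iβ} (which is nonzero since Re(r_β) ≥ r cos β > 0): | r² e^{2iβ} / r_β² − 1 − 2iβ (r₀/r) | ≤ C (r₀/r) β². -/

import Mathlib

open Real

lemma sin_approx_aux {t : ℝ} (h0 : 0 ≤ t) (h : t ≤ π / 3) :
    t - Real.sin t ≤ t ^ 2 / 2 := by
  rcases eq_or_lt_of_le h0 with rfl | ht
  · simp
  rcases le_or_gt t 1 with h1 | h1
  · have := Real.sin_gt_sub_cube ht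
    nlinarith
  · have hs1 : Real.sin 1 ≤ Real.sin t := by
      apply Real.sin_le_sin_of_le_of_le_pi_div_two (by linarith [Real.pi_nonneg]) ?_ h1.le
      linarith [Real.pi_le_four]
    have h34 : (3/4 : ℝ) < Real.sin 1 := by
      have := Real.sin_gt_sub_cube (x := 1) (by norm_num)
      norm_num at this; linarith
    nlinarith

lemma sin_approx {t : ℝ} (h : |t| ≤ π / 3) : |t - Real.sin t| ≤ t ^ 2 / 2 := by
  rcases le_or_gt 0 t with h0 | h0
  · rw [abs_of_nonneg (by linarith [Real.sin_le h0])]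
    exact sin_approx_aux h0 (by rwa [abs_of_nonneg h0] at h)
  · have h0' : 0 ≤ -t := by linarith
    have h2 := sin_approx_aux h0' (by rwa [abs_of_neg h0] at h)
    have h3 := Real.sin_le h0'
    rw [Real.sin_neg] at h2 h3
    rw [abs_of_nonpos (by linarith)]
    nlinarith

lemma exp_I_sub_one_le (t : ℝ) : ‖Complex.exp (Complex.I * t) - 1‖ ≤ |t| := by
  have hre : (Complex.exp (Complex.I * t) - 1).re = Real.cos t - 1 := by
    rw [mul_comm]; simp [Complex.exp_ofReal_mul_I_re]
  have him : (Complex.exp (Complex.I * t) - 1).im = Real.sin t := by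
    rw [mul_comm]; simp [Complex.exp_ofReal_mul_I_im]
  have hsq : ‖Complex.exp (Complex.I * t) - 1‖ ^ 2 ≤ t ^ 2 := by
    rw [Complex.sq_norm, Complex.normSq_apply, hre, him]
    have hc := Real.one_sub_sq_div_two_le_cos (x := t)
    have := Real.sin_sq_add_cos_sq t
    nlinarith
  have := Real.sqrt_le_sqrt hsq
  rwa [Real.sqrt_sq (norm_nonneg _), Real.sqrt_sq_eq_abs] at this

lemma exp_I_taylor2 {t : ℝ} (h : |t| ≤ π / 3) :
    ‖Complex.exp (Complex.I * t) - 1 - Complex.I * t‖ ≤ t ^ 2 := by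
  have hre : (Complex.exp (Complex.I * t) - 1 - Complex.I * t).re = Real.cos t - 1 := by
    rw [mul_comm (Complex.I) (t:ℂ)]; simp [Complex.exp_ofReal_mul_I_re]
  have him : (Complex.exp (Complex.I * t) - 1 - Complex.I * t).im = Real.sin t - t := by
    rw [mul_comm (Complex.I) (t:ℂ)]; simp [Complex.exp_ofReal_mul_I_im]
  calc ‖Complex.exp (Complex.I * t) - 1 - Complex.I * t‖
      ≤ |(Complex.exp (Complex.I * t) - 1 - Complex.I * t).re| +
        |(Complex.exp (Complex.I * t) - 1 - Complex.I * t).im| :=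
        Complex.norm_le_abs_re_add_abs_im _
    _ ≤ t ^ 2 := by
        rw [hre, him]
        have h1 : |Real.cos t - 1| ≤ t ^ 2 / 2 := by
          have hc := Real.one_sub_sq_div_two_le_cos (x := t)
          have := Real.cos_le_one t
          rw [abs_le]; constructor <;> nlinarith
        have h2 : |Real.sin t - t| ≤ t ^ 2 / 2 := by
          have := sin_approx h; rw [abs_sub_comm] at this; linarith [this]
        linarith

set_option maxHeartbeats 1000000 in
/-- There is a universal constant `C > 0` such that for all real `r > 0`, `r₀ ∈ [0, r]`
and `|β| ≤ π/3`, writing `r_β = r₀ + (r - r₀) e^{iβ}`,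
`| r² e^{2iβ} / r_β² - 1 - 2iβ (r₀/r) | ≤ C (r₀/r) β²`. -/
theorem kinetic_correction_expansion :
    ∃ C : ℝ, 0 < C ∧ ∀ r r₀ β : ℝ, 0 < r → r₀ ∈ Set.Icc 0 r → |β| ≤ π / 3 →
      ‖(r : ℂ) ^ 2 * Complex.exp (2 * Complex.I * (β : ℂ)) /
            ((r₀ : ℂ) + ((r : ℂ) - (r₀ : ℂ)) * Complex.exp (Complex.I * (β : ℂ))) ^ 2
          - 1 - 2 * Complex.I * (β : ℂ) * ((r₀ : ℂ) / (r : ℂ))‖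
        ≤ C * (r₀ / r) * β ^ 2 := by
  refine ⟨40, by norm_num, ?_⟩
  intro r r₀ β hr hr₀ hβ
  obtain ⟨h0, h1⟩ := hr₀
  have hrne : (r : ℂ) ≠ 0 := by exact_mod_cast hr.ne'
  set ρ : ℝ := r₀ / r with hρ
  have hρ0 : 0 ≤ ρ := div_nonneg h0 hr.le
  have hρ1 : ρ ≤ 1 := (div_le_one hr).mpr h1
  set R : ℂ := Complex.exp (Complex.I * ((-β : ℝ) : ℂ)) - 1 - Complex.I * ((-β : ℝ) : ℂ)
    with hR
  set u : ℂ := (ρ : ℂ) * (Complex.exp (Complex.I * ((-β : ℝ) : ℂ)) - 1) with hu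
  have hβ' : |(-β : ℝ)| ≤ π / 3 := by rwa [abs_neg]
  have hRabs : ‖R‖ ≤ β ^ 2 := by
    have := exp_I_taylor2 hβ'
    rw [← hR] at this
    simpa using this
  have huabs : ‖u‖ ≤ ρ * |β| := by
    rw [hu, norm_mul, Complex.norm_real, Real.norm_eq_abs, abs_of_nonneg hρ0]
    have := exp_I_sub_one_le (-β)
    rw [abs_neg] at this
    exact mul_le_mul_of_nonneg_left this hρ0
  -- lower bound on |1 + u|
  have hcosβ : (1/2 : ℝ) ≤ Real.cos β := by
    rw [← Real.cos_abs]
    have : Real.cos (π/3) ≤ Real.cos |β| :=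
      Real.cos_le_cos_of_nonneg_of_le_pi (abs_nonneg β)
        (by linarith [Real.pi_nonneg]) hβ
    rwa [Real.cos_pi_div_three] at this
  have hcosre : (Complex.exp (Complex.I * ((-β : ℝ) : ℂ))).re = Real.cos β := by
    rw [mul_comm]
    simpa using Complex.exp_ofReal_mul_I_re (-β)
  have hre1u : (1 + u).re = 1 + ρ * (Real.cos β - 1) := by
    simp only [hu, Complex.add_re, Complex.one_re, Complex.re_ofReal_mul, Complex.sub_re,
      hcosre]
  have h1uabs : (1/2 : ℝ) ≤ ‖1 + u‖ := by
    have h := Complex.re_le_norm (1 + u)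
    rw [hre1u] at h
    nlinarith
  have h1une : (1 : ℂ) + u ≠ 0 := by
    intro hc
    rw [hc] at h1uabs
    simp at h1uabs
    linarith
  have hEne : Complex.exp (Complex.I * (β : ℂ)) ≠ 0 := Complex.exp_ne_zero _
  have hee : Complex.exp (Complex.I * (β : ℂ)) * Complex.exp (Complex.I * ((-β : ℝ) : ℂ)) = 1 := by
    rw [← Complex.exp_add, ← Complex.exp_zero]
    congr 1
    push_cast
    ring
  have hrρ : (r : ℂ) * (ρ : ℂ) = (r₀ : ℂ) := by
    rw [hρ]; push_cast; field_simp
  have hwx : (r₀ : ℂ) + ((r : ℂ) - (r₀ : ℂ)) * Complex.exp (Complex.I * (β : ℂ)) =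
      (r : ℂ) * Complex.exp (Complex.I * (β : ℂ)) * (1 + u) := by
    rw [hu]
    linear_combination (-(r : ℂ) * (ρ : ℂ)) * hee +
      (Complex.exp (Complex.I * (β : ℂ)) - 1) * hrρ
  have hexp2 : Complex.exp (2 * Complex.I * (β : ℂ)) = Complex.exp (Complex.I * (β : ℂ)) ^ 2 := by
    rw [sq, ← Complex.exp_add]
    ring_nf
  have hρc : (r₀ : ℂ) / (r : ℂ) = (ρ : ℂ) := by rw [hρ]; push_cast; ring
  have key : (r : ℂ) ^ 2 * Complex.exp (2 * Complex.I * (β : ℂ)) /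
        ((r₀ : ℂ) + ((r : ℂ) - (r₀ : ℂ)) * Complex.exp (Complex.I * (β : ℂ))) ^ 2
        - 1 - 2 * Complex.I * (β : ℂ) * ((r₀ : ℂ) / (r : ℂ)) =
      (1 - (1 + u) ^ 2 * (1 + 2 * Complex.I * (β : ℂ) * (ρ : ℂ))) / (1 + u) ^ 2 := by
    rw [hwx, hexp2, hρc]
    field_simp
    ring
  have huR : u = (ρ : ℂ) * (R + Complex.I * ((-β : ℝ) : ℂ)) := by
    rw [hu, hR]; ring
  have hNdec : 1 - (1 + u) ^ 2 * (1 + 2 * Complex.I * (β : ℂ) * (ρ : ℂ)) =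
      -2 * (ρ : ℂ) * R - u ^ 2 * (1 + 2 * Complex.I * (β : ℂ) * (ρ : ℂ))
        - 4 * Complex.I * (β : ℂ) * (ρ : ℂ) * u := by
    rw [huR]; push_cast; ring
  have hπ : π ≤ 3.15 := by linarith [Real.pi_lt_d2]
  have hβabs : |β| ≤ 1.05 := by linarith
  have hfac : ‖1 + 2 * Complex.I * (β : ℂ) * (ρ : ℂ)‖ ≤ 3.1 := by
    calc ‖1 + 2 * Complex.I * (β : ℂ) * (ρ : ℂ)‖
        ≤ ‖1‖ + ‖2 * Complex.I * (β : ℂ) * (ρ : ℂ)‖ :=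
          norm_add_le _ _
      _ ≤ 3.1 := by
          simp only [norm_one, norm_mul, Complex.norm_I, Complex.norm_real, Real.norm_eq_abs, Complex.norm_two]
          rw [abs_of_nonneg hρ0]
          nlinarith [abs_nonneg β]
  have hNabs : ‖1 - (1 + u) ^ 2 * (1 + 2 * Complex.I * (β : ℂ) * (ρ : ℂ))‖
      ≤ 10 * ρ * β ^ 2 := by
    rw [hNdec]
    have t1 : ‖-2 * (ρ : ℂ) * R‖ ≤ 2 * ρ * β ^ 2 := by
      simp only [norm_mul, Complex.norm_real, Real.norm_eq_abs, abs_of_nonneg hρ0]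
      have : ‖(-2 : ℂ)‖ = 2 := by norm_num
      rw [this]
      nlinarith
    have t2 : ‖u ^ 2 * (1 + 2 * Complex.I * (β : ℂ) * (ρ : ℂ))‖
        ≤ 3.1 * ρ ^ 2 * β ^ 2 := by
      rw [norm_mul, norm_pow]
      have hu2 : ‖u‖ ^ 2 ≤ (ρ * |β|) ^ 2 := by
        apply pow_le_pow_left₀ (norm_nonneg _) huabs
      calc ‖u‖ ^ 2 * ‖1 + 2 * Complex.I * (β : ℂ) * (ρ : ℂ)‖
          ≤ (ρ * |β|) ^ 2 * 3.1 := by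
            apply mul_le_mul hu2 hfac (norm_nonneg _) (by positivity)
        _ = 3.1 * ρ ^ 2 * β ^ 2 := by rw [mul_pow, sq_abs]; ring
    have t3 : ‖4 * Complex.I * (β : ℂ) * (ρ : ℂ) * u‖ ≤ 4 * ρ ^ 2 * β ^ 2 := by
      simp only [norm_mul, Complex.norm_I, Complex.norm_real, Real.norm_eq_abs, abs_of_nonneg hρ0]
      have h4 : ‖(4 : ℂ)‖ = 4 := by norm_num
      rw [h4]
      nlinarith [abs_nonneg β, norm_nonneg u, sq_abs β]
    calc ‖-2 * (ρ : ℂ) * R - u ^ 2 * (1 + 2 * Complex.I * (β : ℂ) * (ρ : ℂ))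
          - 4 * Complex.I * (β : ℂ) * (ρ : ℂ) * u‖
        ≤ ‖-2 * (ρ : ℂ) * R - u ^ 2 * (1 + 2 * Complex.I * (β : ℂ) * (ρ : ℂ))‖
          + ‖4 * Complex.I * (β : ℂ) * (ρ : ℂ) * u‖ := by
          apply (norm_sub_le _ _).trans
          simp
      _ ≤ ‖-2 * (ρ : ℂ) * R‖
          + ‖u ^ 2 * (1 + 2 * Complex.I * (β : ℂ) * (ρ : ℂ))‖
          + ‖4 * Complex.I * (β : ℂ) * (ρ : ℂ) * u‖ := by
          have := norm_sub_le (-2 * (ρ : ℂ) * R)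
            (u ^ 2 * (1 + 2 * Complex.I * (β : ℂ) * (ρ : ℂ)))
          linarith
      _ ≤ 10 * ρ * β ^ 2 := by nlinarith [mul_nonneg (mul_nonneg hρ0 (sub_nonneg.mpr hρ1)) (sq_nonneg β)]
  have habs1u : (0:ℝ) < ‖1 + u‖ := lt_of_lt_of_le (by norm_num) h1uabs
  rw [key, norm_div, norm_pow]
  rw [div_le_iff₀ (pow_pos habs1u 2)]
  have hsq : (1/4 : ℝ) ≤ ‖1 + u‖ ^ 2 := by nlinarith [norm_nonneg (1 + u)]
  have hgoal : (10 : ℝ) * ρ * β ^ 2 ≤ 40 * (r₀ / r) * β ^ 2 * ‖1 + u‖ ^ 2 := by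
    rw [← hρ]
    nlinarith [sq_nonneg β, mul_nonneg hρ0 (sq_nonneg β)]
  linarith
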